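/- Let P₁(x,y) = a₁x² + b₁xy + c₁y² and P₂(x,y) = a₂x² + b₂xy + c₂y² be homogeneous quadratic polynomials with integer coefficients whose resultant R (the determinant of the 4×4 Sylvester matrix with columns [a₁,b₁,c₁,0], [0,a₁,b₁,c₁], [a₂,b₂,c₂,0], [0,a₂,b₂,c₂]) is nonzero. Let d₃ be the greatest common divisor of the determinants of all 3×3 submatrices of this Sylvester matrix, and set G = R/d₃. Then for all coprime integers m, n, the integer gcd(P₁(m,n), P₂(m,n)) divides G. -/

import Mathlib

/-- **Theorem (gcd bound via the Sylvester matrix).**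
Let `P₁(x,y) = a₁x² + b₁xy + c₁y²` and `P₂(x,y) = a₂x² + b₂xy + c₂y²` have nonzero
resultant `R` (the determinant of the 4×4 Sylvester matrix).  Let `d₃` be the gcd of
the determinants of all 3×3 submatrices of the Sylvester matrix, and `G = R / d₃`.
Then for all coprime integers `m, n`, `gcd(P₁(m,n), P₂(m,n))` divides `G`. -/
theorem stmt1 (a₁ b₁ c₁ a₂ b₂ c₂ : ℤ)
    (M : Matrix (Fin 4) (Fin 4) ℤ)
    (hM : M = !![a₁, 0, a₂, 0; b₁, a₁, b₂, a₂; c₁, b₁, c₂, b₂; 0, c₁, 0, c₂])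
    (hR : M.det ≠ 0)
    (d₃ : ℤ)
    (hd₃ : d₃ = Finset.gcd Finset.univ
      (fun p : Fin 4 × Fin 4 => (M.submatrix p.1.succAbove p.2.succAbove).det))
    (m n : ℤ) (hmn : IsCoprime m n) :
    (Int.gcd (a₁ * m ^ 2 + b₁ * m * n + c₁ * n ^ 2)
             (a₂ * m ^ 2 + b₂ * m * n + c₂ * n ^ 2) : ℤ) ∣ M.det / d₃ := by
  set P₁ : ℤ := a₁ * m ^ 2 + b₁ * m * n + c₁ * n ^ 2 with hP₁
  set P₂ : ℤ := a₂ * m ^ 2 + b₂ * m * n + c₂ * n ^ 2 with hP₂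
  set g : ℤ := (Int.gcd P₁ P₂ : ℤ) with hg
  have hadj : ∀ i j, d₃ ∣ M.adjugate i j := by
    intro i j
    have h1 : M.adjugate i j
        = (-1)^(j+i:ℕ) * (M.submatrix j.succAbove i.succAbove).det :=
      Matrix.adjugate_fin_succ_eq_det_submatrix (n := 3) M i j
    have h2 : d₃ ∣ (M.submatrix j.succAbove i.succAbove).det := by
      have h := Finset.gcd_dvd (s := Finset.univ)
        (f := fun p : Fin 4 × Fin 4 => (M.submatrix p.1.succAbove p.2.succAbove).det)
        (Finset.mem_univ ((j, i) : Fin 4 × Fin 4))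
      rw [hd₃]; exact h
    rw [h1]
    exact Dvd.dvd.mul_left h2 _
  have hd₃ne : d₃ ≠ 0 := by
    intro h0
    have hz : M.adjugate = 0 := by
      ext i j
      have h := hadj i j
      rw [h0] at h
      simpa using zero_dvd_iff.mp h
    have h := Matrix.mul_adjugate M
    rw [hz, Matrix.mul_zero] at h
    have h1 := congrFun (congrFun h.symm 0) 0
    simp at h1
    exact hR h1
  set v : Fin 4 → ℤ := ![m ^ 3, m ^ 2 * n, m * n ^ 2, n ^ 3] with hv
  have hvM : Matrix.vecMul v M = ![m * P₁, n * P₁, m * P₂, n * P₂] := by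
    subst hM
    ext i
    fin_cases i <;>
      simp [Matrix.vecMul, dotProduct, hv, Fin.sum_univ_four, hP₁, hP₂] <;> ring
  have key : ∀ i, M.det * v i = ∑ j, (Matrix.vecMul v M) j * M.adjugate j i := by
    intro i
    have h2 : Matrix.vecMul (Matrix.vecMul v M) M.adjugate = M.det • v := by
      rw [Matrix.vecMul_vecMul, Matrix.mul_adjugate]
      ext k
      simp [Matrix.vecMul, dotProduct, Matrix.one_apply, mul_ite, Finset.sum_ite_eq, mul_comm]
    have h3 := congrFun h2 i
    rw [Matrix.vecMul, dotProduct] at h3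
    simpa [mul_comm] using h3.symm
  have hdvd : ∀ i, g * d₃ ∣ M.det * v i := by
    intro i
    rw [key i]
    apply Finset.dvd_sum
    intro j _
    apply mul_dvd_mul
    · rw [hvM]
      fin_cases j
      · exact Dvd.dvd.mul_left (Int.gcd_dvd_left P₁ P₂) m
      · exact Dvd.dvd.mul_left (Int.gcd_dvd_left P₁ P₂) n
      · exact Dvd.dvd.mul_left (Int.gcd_dvd_right P₁ P₂) m
      · exact Dvd.dvd.mul_left (Int.gcd_dvd_right P₁ P₂) n
    · exact hadj j i
  have hcop : IsCoprime (m ^ 3) (n ^ 3) := hmn.pow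
  obtain ⟨s, t, hst⟩ := hcop
  have hRdvd : g * d₃ ∣ M.det := by
    have := dvd_add ((hdvd 0).mul_left s) ((hdvd 3).mul_left t)
    have hv0 : v 0 = m ^ 3 := rfl
    have hv3 : v 3 = n ^ 3 := rfl
    rw [hv0, hv3] at this
    have heq : s * (M.det * m ^ 3) + t * (M.det * n ^ 3) = M.det := by
      have : M.det * (s * m ^ 3 + t * n ^ 3) = M.det * 1 := by rw [hst]
      linarith [this]
    rwa [heq] at this
  obtain ⟨k, hk⟩ := hRdvd
  have : M.det / d₃ = g * k := by
    rw [hk]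
    rw [show g * d₃ * k = d₃ * (g * k) by ring]
    exact Int.mul_ediv_cancel_left _ hd₃ne
  rw [this]
  exact Dvd.intro k rfl
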